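/- Let χ be a primitive Dirichlet character modulo q and α ∈ ℝ with αq ∈ ℤ. The linear twist L(s,χ,α) = Σ_{n≥1} χ(n) e^{-2πi nα} n^{-s} extends meromorphically with at most a simple pole at s = 1, and its residue there equals χ̄(αq)/τ_{χ̄}. -/

import Mathlib

open Complex Finset Filter Topology

open ZMod in
private lemma sum_range_eq_sum_zmod {q : ℕ} [NeZero q] (g : ZMod q → ℂ) :
    ∑ a ∈ range q, g a = ∑ j : ZMod q, g j := by
  refine (Finset.sum_nbij' (fun j : ZMod q => j.val) (fun a : ℕ => (a : ZMod q))
    (fun j _ => Finset.mem_range.mpr j.val_lt) (fun a _ => Finset.mem_univ _)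
    (fun j _ => by simp) (fun a ha => ZMod.val_cast_of_lt (Finset.mem_range.mp ha))
    (fun j _ => by simp)).symm

open ZMod in
/-- If αq ∈ ℤ, the linear twist L(s,χ,α) extends meromorphically with at most a simple
pole at s = 1, with residue χ̄(αq)/τ_{χ̄}. -/
theorem linear_twist_residue (q : ℕ) (hq : 0 < q)
    (χ : DirichletCharacter ℂ q) (hχ : χ.IsPrimitive) (α : ℝ)
    (p : ℤ) (hp : (p : ℝ) = α * q) :
    ∃ G : ℂ → ℂ, DifferentiableOn ℂ G {s : ℂ | s ≠ 1} ∧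
      (∀ s : ℂ, 1 < s.re →
        G s = ∑' n : ℕ, χ ((n + 1 : ℕ) : ZMod q) *
          exp (-(2 * Real.pi * I * (n + 1) * α)) * ((n + 1 : ℕ) : ℂ) ^ (-s)) ∧
      Tendsto (fun s : ℂ => (s - 1) * G s) (𝓝[≠] (1 : ℂ))
        (𝓝 ((starRingEnd ℂ) (χ (p : ZMod q)) /
          ∑ a ∈ range q, (starRingEnd ℂ) (χ (a : ZMod q)) * exp (2 * Real.pi * I * a / q))) := by
  have : NeZero q := ⟨hq.ne'⟩
  have hqC : (q : ℂ) ≠ 0 := Nat.cast_ne_zero.mpr hq.ne'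
  have hαC : (α : ℂ) = (p : ℂ) / q := by
    have : (p : ℂ) = (α : ℂ) * q := by exact_mod_cast congrArg (Complex.ofReal) hp
    field_simp [this]
    exact this.symm
  set Φ : ZMod q → ℂ := fun j => stdAddChar (-(j * (p : ZMod q))) * χ j with hΦdef
  refine ⟨ZMod.LFunction Φ, fun s hs =>
      (ZMod.differentiableAt_LFunction Φ s (Or.inl hs)).differentiableWithinAt, fun s hs => ?_, ?_⟩
  · rw [ZMod.LFunction_eq_LSeries Φ hs, LSeries,
      Summable.tsum_eq_zero_add (ZMod.LSeriesSummable_of_one_lt_re Φ hs), LSeries.term_zero, zero_add]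
    refine tsum_congr fun n => ?_
    rw [LSeries.term_of_ne_zero (Nat.succ_ne_zero n)]
    have h1 : (-(((n + 1 : ℕ) : ZMod q) * (p : ZMod q))) =
        (((-((n : ℤ) + 1) * p : ℤ)) : ZMod q) := by push_cast; ring
    rw [hΦdef]
    simp only [h1, stdAddChar_coe]
    have h2 : (2 * ↑Real.pi * I * ((-((n : ℤ) + 1) * p : ℤ) : ℂ) / q) =
        -(2 * ↑Real.pi * I * ((n : ℂ) + 1) * (α : ℂ)) := by
      rw [hαC]; push_cast; ring
    rw [h2, cpow_neg, div_eq_mul_inv]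
    ring
  · have hres := ZMod.LFunction_residue_one Φ
    set T : ℂ := gaussSum χ stdAddChar with hT
    set T' : ℂ := gaussSum χ⁻¹ stdAddChar with hT'
    -- the sum of Φ is the Fourier transform of χ at p
    have hΦsum : ∑ j, Φ j = χ⁻¹ (-(p : ZMod q)) * T := by
      rw [← hχ.fourierTransform_eq_inv_mul_gaussSum (p : ZMod q), dft_apply]
      simp only [hΦdef, smul_eq_mul]
    -- the denominator is T'
    have hden : (∑ a ∈ range q, (starRingEnd ℂ) (χ (a : ZMod q)) *
        exp (2 * Real.pi * I * a / q)) = T' := by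
      rw [show (fun a : ℕ => (starRingEnd ℂ) (χ (a : ZMod q)) * exp (2 * Real.pi * I * a / q))
            = fun a : ℕ => χ⁻¹ ((a : ℕ) : ZMod q) * stdAddChar ((a : ℕ) : ZMod q) from ?_]
      · rw [sum_range_eq_sum_zmod (fun j => χ⁻¹ j * stdAddChar j)]
        rfl
      · funext a
        rw [starRingEnd_apply, MulChar.star_apply']
        congr 1
        rw [show ((a : ℕ) : ZMod q) = (((a : ℕ) : ℤ) : ZMod q) by push_cast; rfl, stdAddChar_coe]
        push_cast
        ring_nf
    -- key identity T' * T = q * χ(-1) via Fourier inversion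
    have hfun : 𝓕 ⇑χ = fun k => χ⁻¹ (-k) * T :=
      funext fun k => hχ.fourierTransform_eq_inv_mul_gaussSum k
    have hkey : T' * T = (q : ℂ) * χ (-1) := by
      have h2 := congrFun (dft_dft ⇑χ) 1
      rw [hfun] at h2
      rw [show (fun k : ZMod q => χ⁻¹ (-k) * T) = fun k => (fun x => χ⁻¹ (-x)) k * T from rfl,
        dft_mul_const (fun x : ZMod q => χ⁻¹ (-x)) T] at h2
      rw [show (fun x : ZMod q => χ⁻¹ (-x)) = fun x => (⇑χ⁻¹) (-x) from rfl,
        dft_comp_neg ⇑χ⁻¹] at h2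
      have h3 : 𝓕 ⇑χ⁻¹ (-1) = T' := by
        rw [dft_apply, hT', gaussSum]
        refine Finset.sum_congr rfl fun j _ => ?_
        rw [smul_eq_mul, mul_comm, mul_neg, neg_neg, mul_one]
      have h2' : 𝓕 ⇑χ⁻¹ (-1) * T = (q : ℂ) * χ (-1) := by simpa using h2
      rw [h3] at h2'
      exact h2'
    have hχ1 : χ (-1) * χ (-1) = 1 := by
      rw [← map_mul, neg_mul_neg, one_mul, map_one]
    have hχ10 : χ (-1) ≠ 0 := fun h => by simp [h] at hχ1
    have hT0 : T ≠ 0 := by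
      intro h
      rw [h, mul_zero] at hkey
      exact hqC (by simpa [hχ10] using hkey.symm)
    have hT'0 : T' ≠ 0 := by
      intro h
      rw [h, zero_mul] at hkey
      exact hqC (by simpa [hχ10] using hkey.symm)
    have hsum : (∑ j, Φ j) / (q : ℂ) = (starRingEnd ℂ) (χ (p : ZMod q)) /
        ∑ a ∈ range q, (starRingEnd ℂ) (χ (a : ZMod q)) * exp (2 * Real.pi * I * a / q) := by
      rw [hΦsum, hden, starRingEnd_apply, MulChar.star_apply']
      rw [show (-(p : ZMod q)) = (-1) * (p : ZMod q) by ring, map_mul]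
      rw [MulChar.inv_apply_eq_inv' χ (-1), MulChar.inv_apply_eq_inv' χ (p : ZMod q)]
      have hc : (χ (-1))⁻¹ = χ (-1) := inv_eq_of_mul_eq_one_right hχ1
      have hq2 : (q : ℂ) = T' * T * χ (-1) := by
        calc (q : ℂ) = (q : ℂ) * χ (-1) * χ (-1) := by rw [mul_assoc, hχ1, mul_one]
        _ = T' * T * χ (-1) := by rw [← hkey]
      rw [hc, hq2,
        div_eq_div_iff (mul_ne_zero (mul_ne_zero hT'0 hT0) hχ10) hT'0]
      ring
    rw [← Finset.sum_div, hsum] at hres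
    exact hres
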